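/- Let W_r be the random walk matrix of the replacement product and suppose W_r³ = d̄·W_z + (1−d̄)·C where d̄ = d²/(d+1)³, ‖C‖ ≤ 1, and μ₂(W_z) ≤ 1 − λ_G·λ_H². Then μ₂(W_r³) ≤ 1 − d̄·λ_G·λ_H², and consequently 1 − μ₂(W_r) ≥ 1 − (1 − d̄·λ_G·λ_H²)^{1/3} ≥ (1/6)·d̄·λ_G·λ_H². -/

import Mathlib

/-- The second largest eigenvalue of a symmetric doubly-stochastic matrix with top
eigenvector `𝟙`, via its variational characterization: the supremum of `‖M·x‖₂` over
unit vectors `x` orthogonal to `𝟙`. -/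
noncomputable def mu2 {N : ℕ} (M : Matrix (Fin N) (Fin N) ℝ) : ℝ :=
  sSup {r : ℝ | ∃ x : Fin N → ℝ, ∑ i, x i ^ 2 = 1 ∧ ∑ i, x i = 0 ∧
    r = Real.sqrt (∑ i, (M.mulVec x i) ^ 2)}

section helpers

variable {N : ℕ}

lemma rpsg_l2_add (f g : Fin N → ℝ) :
    Real.sqrt (∑ i, (f i + g i) ^ 2) ≤
      Real.sqrt (∑ i, f i ^ 2) + Real.sqrt (∑ i, g i ^ 2) := by
  have h := norm_add_le ((WithLp.equiv 2 (Fin N → ℝ)).symm f)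
      ((WithLp.equiv 2 (Fin N → ℝ)).symm g)
  simpa [EuclideanSpace.norm_eq, WithLp.equiv_symm_apply, PiLp.toLp_apply, Real.norm_eq_abs,
    sq_abs] using h

lemma rpsg_l2_smul (c : ℝ) (hc : 0 ≤ c) (f : Fin N → ℝ) :
    Real.sqrt (∑ i, (c * f i) ^ 2) = c * Real.sqrt (∑ i, f i ^ 2) := by
  simp_rw [mul_pow, ← Finset.mul_sum]
  rw [Real.sqrt_mul (sq_nonneg c), Real.sqrt_sq hc]

lemma rpsg_symm_dot (M : Matrix (Fin N) (Fin N) ℝ) (hM : M.IsHermitian)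
    (u v : Fin N → ℝ) :
    ∑ i, M.mulVec u i * v i = ∑ i, u i * M.mulVec v i := by
  have hs : ∀ i j, M j i = M i j := fun i j => by
    have := congrFun (congrFun hM i) j
    simpa [Matrix.conjTranspose_apply] using this
  simp only [Matrix.mulVec, dotProduct, Finset.sum_mul, Finset.mul_sum]
  rw [Finset.sum_comm]
  refine Finset.sum_congr rfl fun j _ => Finset.sum_congr rfl fun i _ => ?_
  rw [hs i j]; ring

lemma rpsg_mu2_bdd (M : Matrix (Fin N) (Fin N) ℝ) :
    BddAbove {r : ℝ | ∃ x : Fin N → ℝ, ∑ i, x i ^ 2 = 1 ∧ ∑ i, x i = 0 ∧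
      r = Real.sqrt (∑ i, (M.mulVec x i) ^ 2)} := by
  refine ⟨Real.sqrt (∑ i, ∑ j, M i j ^ 2), ?_⟩
  rintro r ⟨x, hx1, _, rfl⟩
  apply Real.sqrt_le_sqrt
  apply Finset.sum_le_sum
  intro i _
  have h := Finset.sum_mul_sq_le_sq_mul_sq Finset.univ (fun j => M i j) x
  simpa [Matrix.mulVec, dotProduct, hx1] using h

lemma rpsg_le_mu2 (M : Matrix (Fin N) (Fin N) ℝ) (x : Fin N → ℝ)
    (hx1 : ∑ i, x i ^ 2 = 1) (hx0 : ∑ i, x i = 0) :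
    Real.sqrt (∑ i, (M.mulVec x i) ^ 2) ≤ mu2 M :=
  le_csSup (rpsg_mu2_bdd M) ⟨x, hx1, hx0, rfl⟩

lemma rpsg_mu2_nonneg (M : Matrix (Fin N) (Fin N) ℝ) : 0 ≤ mu2 M :=
  Real.sSup_nonneg (by rintro r ⟨x, _, _, rfl⟩; exact Real.sqrt_nonneg _)

/-- `‖M x‖³ ≤ ‖M³ x‖` for symmetric `M` and a unit vector `x`. -/
lemma rpsg_cube (M : Matrix (Fin N) (Fin N) ℝ) (hM : M.IsHermitian)
    (x : Fin N → ℝ) (hx1 : ∑ i, x i ^ 2 = 1) :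
    Real.sqrt (∑ i, (M.mulVec x i) ^ 2) ^ 3 ≤
      Real.sqrt (∑ i, ((M ^ 3).mulVec x i) ^ 2) := by
  set y := M.mulVec x with hy
  have h3 : (M ^ 3).mulVec x = M.mulVec (M.mulVec y) := by
    rw [pow_succ, pow_two, Matrix.mul_assoc, ← Matrix.mulVec_mulVec, ← Matrix.mulVec_mulVec]
  rw [h3]
  set a := Real.sqrt (∑ i, y i ^ 2) with ha
  set b := Real.sqrt (∑ i, (M.mulVec y i) ^ 2) with hb
  set c := Real.sqrt (∑ i, (M.mulVec (M.mulVec y) i) ^ 2) with hc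
  have ha0 : 0 ≤ a := Real.sqrt_nonneg _
  have hb0 : 0 ≤ b := Real.sqrt_nonneg _
  have hc0 : 0 ≤ c := Real.sqrt_nonneg _
  have hasq : a ^ 2 = ∑ i, y i ^ 2 := Real.sq_sqrt (by positivity)
  have hbsq : b ^ 2 = ∑ i, (M.mulVec y i) ^ 2 := Real.sq_sqrt (by positivity)
  -- a² = ⟨y, y⟩ = ⟨Mx, y⟩ = ⟨x, My⟩ ≤ ‖x‖ ‖My‖ = b
  have h1 : a ^ 2 ≤ b := by
    have e1 : ∑ i, y i ^ 2 = ∑ i, x i * M.mulVec y i := by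
      rw [← rpsg_symm_dot M hM x y]
      simp [hy, pow_two]
    have e2 : ∑ i, x i * M.mulVec y i ≤
        Real.sqrt (∑ i, x i ^ 2) * Real.sqrt (∑ i, (M.mulVec y i) ^ 2) :=
      Real.sum_mul_le_sqrt_mul_sqrt _ _ _
    rw [hasq, e1]
    calc ∑ i, x i * M.mulVec y i ≤ _ := e2
      _ = b := by rw [hx1, Real.sqrt_one, one_mul]
  -- b² = ⟨My, My⟩ = ⟨y, M(My)⟩ ≤ a·c
  have h2 : b ^ 2 ≤ a * c := by
    have e1 : ∑ i, (M.mulVec y i) ^ 2 = ∑ i, y i * M.mulVec (M.mulVec y) i := by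
      rw [← rpsg_symm_dot M hM y (M.mulVec y)]
      simp [pow_two]
    have e2 : ∑ i, y i * M.mulVec (M.mulVec y) i ≤ a * c :=
      Real.sum_mul_le_sqrt_mul_sqrt _ _ _
    rw [hbsq, e1]; exact e2
  rcases eq_or_lt_of_le ha0 with h | h
  · rw [← h]; simpa using hc0
  · nlinarith [sq_nonneg (a ^ 2 - b)]

end helpers

/-- If `W_r³ = d̄·W_z + (1−d̄)·C` with `d̄ = d²/(d+1)³`, `‖C‖ ≤ 1` and
`μ₂(W_z) ≤ 1 − λ_G·λ_H²`, then `μ₂(W_r³) ≤ 1 − d̄·λ_G·λ_H²`, and consequently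
`1 − μ₂(W_r) ≥ 1 − (1 − d̄·λ_G·λ_H²)^{1/3} ≥ (1/6)·d̄·λ_G·λ_H²`. -/
theorem replacement_product_spectral_gap {N : ℕ} (d : ℕ) (hd : 1 ≤ d)
    (lamG lamH : ℝ) (hG : lamG ∈ Set.Ioo (0 : ℝ) 1) (hH : lamH ∈ Set.Ioo (0 : ℝ) 1)
    (Wr Wz C : Matrix (Fin N) (Fin N) ℝ)
    (hWr : Wr.IsHermitian) (hWz : Wz.IsHermitian)
    (hWr1 : Wr.mulVec (fun _ => 1) = fun _ => 1)
    (hWz1 : Wz.mulVec (fun _ => 1) = fun _ => 1)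
    (dbar : ℝ) (hdbar : dbar = (d : ℝ) ^ 2 / ((d : ℝ) + 1) ^ 3)
    (hdecomp : Wr ^ 3 = dbar • Wz + (1 - dbar) • C)
    (hC : ∀ x : Fin N → ℝ,
      Real.sqrt (∑ i, (C.mulVec x i) ^ 2) ≤ Real.sqrt (∑ i, x i ^ 2))
    (hmuz : mu2 Wz ≤ 1 - lamG * lamH ^ 2) :
    mu2 (Wr ^ 3) ≤ 1 - dbar * lamG * lamH ^ 2 ∧
    1 - mu2 Wr ≥ 1 - (1 - dbar * lamG * lamH ^ 2) ^ ((1 : ℝ) / 3) ∧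
    1 - (1 - dbar * lamG * lamH ^ 2) ^ ((1 : ℝ) / 3) ≥
      (1 / 6) * dbar * lamG * lamH ^ 2 := by
  have hd1 : (1 : ℝ) ≤ (d : ℝ) := by exact_mod_cast hd
  have hdbar_pos : 0 < dbar := by rw [hdbar]; positivity
  have hdbar_lt : dbar < 1 := by
    rw [hdbar, div_lt_one (by positivity)]; nlinarith
  have ht_pos : 0 < lamG * lamH ^ 2 := by
    have := hG.1; have := hH.1; positivity
  have ht_lt : lamG * lamH ^ 2 ≤ 1 := by nlinarith [hG.2, hH.2, hH.1, hG.1, sq_nonneg lamH]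
  set s : ℝ := dbar * lamG * lamH ^ 2 with hs
  have hs_pos : 0 < s := by rw [hs, mul_assoc]; exact mul_pos hdbar_pos ht_pos
  have hs_lt : s < 1 := by
    rw [hs, mul_assoc]
    calc dbar * (lamG * lamH ^ 2) ≤ dbar * 1 := by
          exact mul_le_mul_of_nonneg_left ht_lt hdbar_pos.le
      _ < 1 := by linarith
  -- Part (a)
  have parta : mu2 (Wr ^ 3) ≤ 1 - s := by
    apply Real.sSup_le _ (by linarith)
    rintro r ⟨x, hx1, hx0, rfl⟩
    have hdec : (Wr ^ 3).mulVec x =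
        (fun i => dbar * Wz.mulVec x i) + (fun i => (1 - dbar) * C.mulVec x i) := by
      rw [hdecomp]
      funext i
      simp [Matrix.add_mulVec, Matrix.smul_mulVec, Pi.smul_apply, smul_eq_mul]
    rw [hdec]
    have h1 : Real.sqrt (∑ i, (dbar * Wz.mulVec x i + (1 - dbar) * C.mulVec x i) ^ 2) ≤
        Real.sqrt (∑ i, (dbar * Wz.mulVec x i) ^ 2) +
          Real.sqrt (∑ i, ((1 - dbar) * C.mulVec x i) ^ 2) :=
      rpsg_l2_add _ _
    have h2 : Real.sqrt (∑ i, (dbar * Wz.mulVec x i) ^ 2) ≤ dbar * (1 - lamG * lamH ^ 2) := by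
      rw [rpsg_l2_smul dbar hdbar_pos.le]
      exact mul_le_mul_of_nonneg_left ((rpsg_le_mu2 Wz x hx1 hx0).trans hmuz) hdbar_pos.le
    have h3 : Real.sqrt (∑ i, ((1 - dbar) * C.mulVec x i) ^ 2) ≤ 1 - dbar := by
      rw [rpsg_l2_smul (1 - dbar) (by linarith)]
      have := (hC x).trans_eq (by rw [hx1, Real.sqrt_one])
      nlinarith
    calc Real.sqrt (∑ i, ((fun i => dbar * Wz.mulVec x i) + fun i => (1 - dbar) * C.mulVec x i) i ^ 2)
        = Real.sqrt (∑ i, (dbar * Wz.mulVec x i + (1 - dbar) * C.mulVec x i) ^ 2) := by rfl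
      _ ≤ _ := h1
      _ ≤ dbar * (1 - lamG * lamH ^ 2) + (1 - dbar) := by linarith
      _ = 1 - s := by rw [hs]; ring
  -- cube-root bound on mu2 Wr
  have hcube : mu2 Wr ≤ (1 - s) ^ ((1 : ℝ) / 3) := by
    apply Real.sSup_le _ (Real.rpow_nonneg (by linarith) _)
    rintro r ⟨x, hx1, hx0, rfl⟩
    have h1 : Real.sqrt (∑ i, (Wr.mulVec x i) ^ 2) ^ 3 ≤ 1 - s :=
      (rpsg_cube Wr hWr x hx1).trans ((rpsg_le_mu2 (Wr ^ 3) x hx1 hx0).trans parta)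
    set a := Real.sqrt (∑ i, (Wr.mulVec x i) ^ 2) with ha
    have ha0 : 0 ≤ a := Real.sqrt_nonneg _
    calc a = (a ^ (3 : ℕ)) ^ ((1 : ℝ) / 3) := by
          rw [← Real.rpow_natCast a 3, ← Real.rpow_mul ha0]
          norm_num
      _ ≤ (1 - s) ^ ((1 : ℝ) / 3) :=
          Real.rpow_le_rpow (by positivity) h1 (by norm_num)
  -- Part (c)
  have partc : 1 - (1 - s) ^ ((1 : ℝ) / 3) ≥ (1 / 6) * s := by
    have hkey : (1 - s) ^ ((1 : ℝ) / 3) ≤ 1 - s / 6 := by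
      have h6 : (0 : ℝ) ≤ 1 - s / 6 := by linarith
      have hs3 : s ^ 3 ≤ s := by nlinarith [mul_nonneg (mul_nonneg hs_pos.le (sub_nonneg.mpr hs_lt.le)) (by linarith : (0:ℝ) ≤ 1 + s)]
      have hpow : 1 - s ≤ (1 - s / 6) ^ (3 : ℕ) := by nlinarith [sq_nonneg s]
      calc (1 - s) ^ ((1 : ℝ) / 3) ≤ ((1 - s / 6) ^ (3 : ℕ)) ^ ((1 : ℝ) / 3) :=
            Real.rpow_le_rpow (by linarith) hpow (by norm_num)
        _ = 1 - s / 6 := by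
            rw [← Real.rpow_natCast (1 - s / 6) 3, ← Real.rpow_mul h6]
            norm_num
    linarith
  refine ⟨parta, by linarith, ?_⟩
  calc 1 - (1 - s) ^ ((1 : ℝ) / 3) ≥ (1 / 6) * s := partc
    _ = 1 / 6 * dbar * lamG * lamH ^ 2 := by rw [hs]; ring
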